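/- For a symmetric 3×3 matrix A with diagonal entries 2, suppose A = G^T A₀ G for some 3×3 integer matrix G and fixed symmetric matrix A₀. Let N = J_u + m·E^{1u} for u ∈ {2,3}, where m equals the (1,u) off-diagonal entry of A. Then (GN)^T A₀ (GN) equals the pseudo-Cartan mutation of A at vertex 1, namely the matrix obtained from A by replacing the (2,3) and (3,2) entries c with a_{12}a_{13} - c. -/

import Mathlib

open Matrix

/-- `J_u`: identity matrix with the `(u,u)`-entry replaced by `-1`. -/
def Jmat (u : Fin 3) : Matrix (Fin 3) (Fin 3) ℤ :=
  Matrix.of fun i j => if i = j then (if i = u then -1 else 1) else 0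

theorem inductive_step (A A₀ G : Matrix (Fin 3) (Fin 3) ℤ)
    (hsym : Aᵀ = A) (hdiag : ∀ i, A i i = 2) (hA₀ : A₀ᵀ = A₀)
    (hAG : A = Gᵀ * A₀ * G) (u : Fin 3) (hu : u = 1 ∨ u = 2) :
    let N : Matrix (Fin 3) (Fin 3) ℤ := Jmat u + Matrix.single 0 u (A 0 u)
    (G * N)ᵀ * A₀ * (G * N) =
      Matrix.of fun i j =>
        if (i = 1 ∧ j = 2) ∨ (i = 2 ∧ j = 1) then A 0 1 * A 0 2 - A 1 2 else A i j := by
  intro N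
  have key : (G * N)ᵀ * A₀ * (G * N) = Nᵀ * A * N := by
    rw [hAG]; simp [Matrix.transpose_mul, Matrix.mul_assoc]
  rw [key]
  have h10 : A 1 0 = A 0 1 := congrFun (congrFun hsym 0) 1
  have h20 : A 2 0 = A 0 2 := congrFun (congrFun hsym 0) 2
  have h21 : A 2 1 = A 1 2 := congrFun (congrFun hsym 1) 2
  ext i j
  rcases hu with hu | hu <;> subst hu <;> fin_cases i <;> fin_cases j <;>
    simp [N, Jmat, Matrix.mul_apply, Fin.sum_univ_three, Matrix.single,
      Matrix.transpose_apply, hdiag, h10, h20, h21] <;> ring
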